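/- Cost of privacy is nonnegative for the stochastic approach: let A be finite, p̄ a strictly positive probability vector, z : A → ℝ strictly positive, γ > 0, and w : A → ℝ with w(α) ≤ log p̄(α) for all α (the privatized log-weights, e.g., w(α) = ψ(k p̄(α)) − ψ(k)). Define the private policy P̃(α) = e^{w(α)} z(α)/∑ e^{w(α')} z(α') and the non-private value V = γ·log ∑_α p̄(α) z(α). Then ΔC = γ·∑_α P̃(α)·(w(α) − log p̄(α)) + V − γ·log ∑_α e^{w(α)} z(α) ≥ 0. -/

import Mathlib

open Finset

theorem cost_of_privacy_nonneg
    {A : Type*} [Fintype A] [Nonempty A]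
    (pbar : A → ℝ) (hp : ∀ α, 0 < pbar α) (hsum : ∑ α, pbar α = 1)
    (z : A → ℝ) (hz : ∀ α, 0 < z α) (γ : ℝ) (hγ : 0 < γ)
    (w : A → ℝ) (hw : ∀ α, w α ≤ Real.log (pbar α))
    (Ptilde : A → ℝ)
    (hPt : ∀ α, Ptilde α =
      Real.exp (w α) * z α / ∑ α', Real.exp (w α') * z α')
    (V : ℝ) (hV : V = γ * Real.log (∑ α, pbar α * z α)) :
    0 ≤ γ * (∑ α, Ptilde α * (w α - Real.log (pbar α)))
        + V - γ * Real.log (∑ α, Real.exp (w α) * z α) := by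
  have hS : 0 < ∑ α', Real.exp (w α') * z α' :=
    Finset.sum_pos (fun α _ => mul_pos (Real.exp_pos _) (hz α)) univ_nonempty
  have hSp : 0 < ∑ α, pbar α * z α :=
    Finset.sum_pos (fun α _ => mul_pos (hp α) (hz α)) univ_nonempty
  have hPt0 : ∀ α, 0 ≤ Ptilde α := fun α => by
    rw [hPt]; exact div_nonneg (mul_nonneg (Real.exp_pos _).le (hz α).le) hS.le
  have hPsum : ∑ α, Ptilde α = 1 := by
    simp only [hPt]
    rw [← Finset.sum_div, div_self hS.ne']
  have hjensen : ∑ α, Ptilde α * Real.log (pbar α * Real.exp (-(w α)))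
      ≤ Real.log (∑ α, Ptilde α * (pbar α * Real.exp (-(w α)))) := by
    have := (strictConcaveOn_log_Ioi.concaveOn).le_map_sum
      (t := Finset.univ) (w := Ptilde) (p := fun α => pbar α * Real.exp (-(w α)))
      (fun i _ => hPt0 i) hPsum
      (fun i _ => Set.mem_Ioi.2 (mul_pos (hp i) (Real.exp_pos _)))
    simpa using this
  have hsum2 : ∑ α, Ptilde α * (pbar α * Real.exp (-(w α)))
      = (∑ α, pbar α * z α) / (∑ α', Real.exp (w α') * z α') := by
    rw [Finset.sum_div]
    refine Finset.sum_congr rfl fun α _ => ?_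
    rw [hPt, Real.exp_neg]
    field_simp
  have hlog : ∀ α, Real.log (pbar α * Real.exp (-(w α)))
      = Real.log (pbar α) - w α := fun α => by
    rw [Real.log_mul (hp α).ne' (Real.exp_pos _).ne', Real.log_exp]; ring
  have key : ∑ α, Ptilde α * (Real.log (pbar α) - w α)
      ≤ Real.log (∑ α, pbar α * z α) - Real.log (∑ α', Real.exp (w α') * z α') := by
    calc ∑ α, Ptilde α * (Real.log (pbar α) - w α)
        = ∑ α, Ptilde α * Real.log (pbar α * Real.exp (-(w α))) := by
          refine Finset.sum_congr rfl fun α _ => ?_; rw [hlog]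
      _ ≤ Real.log (∑ α, Ptilde α * (pbar α * Real.exp (-(w α)))) := hjensen
      _ = Real.log (∑ α, pbar α * z α) - Real.log (∑ α', Real.exp (w α') * z α') := by
          rw [hsum2, Real.log_div hSp.ne' hS.ne']
  have h1 : ∑ α, Ptilde α * (w α - Real.log (pbar α))
      = -∑ α, Ptilde α * (Real.log (pbar α) - w α) := by
    rw [← Finset.sum_neg_distrib]
    refine Finset.sum_congr rfl fun α _ => ?_; ring
  rw [hV, h1]
  nlinarith [key]
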